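/- arXiv:1202.2112 — 5 statements merged into one kernel-verified Lean document; each statement's English description precedes it below -/
import Mathlib

section
/- Let f be a monotone submodular function on sequences over V with f(⟨⟩) = 0, and let N ≥ 1. Suppose a sequence Ŝ = ⟨ŝ₁,…,ŝ_N⟩ is built greedily with additive errors ε₁,…,ε_N ≥ 0, i.e., for each i, f(Ŝ_{i-1} ⊕ ⟨ŝ_i⟩) − f(Ŝ_{i-1}) ≥ max_{s ∈ V} [f(Ŝ_{i-1} ⊕ ⟨s⟩) − f(Ŝ_{i-1})] − ε_i, where Ŝ_{i-1} = ⟨ŝ₁,…,ŝ_{i-1}⟩. Then for any sequence S* of length at most N, f(Ŝ) ≥ (1 − 1/e) f(S*) − Σ_{i=1}^N ε_i. -/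
open Finset

-- auxiliary: submodular sum of marginals
lemma marg_sum {V : Type*} (f : List V → ℝ)
    (hsub : ∀ (S₁ S₂ : List V) (a : V),
      f (S₁ ++ S₂ ++ [a]) - f (S₁ ++ S₂) ≤ f (S₁ ++ [a]) - f S₁) :
    ∀ (P L : List V), f (P ++ L) ≤ f P + (L.map (fun a => f (P ++ [a]) - f P)).sum := by
  intro P L
  induction L using List.reverseRecOn with
  | nil => simp
  | append_singleton L' a ih =>
      have h := hsub P L' a
      rw [← List.append_assoc] at *
      simp only [List.map_append, List.sum_append, List.map_cons, List.map_nil,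
        List.sum_cons, List.sum_nil]
      linarith

/-- approximate greedy guarantee (Streeter–Golovin).  If `Ŝ` of length `N`
is built greedily with additive errors `ε i ≥ 0`, then for any benchmark sequence `S*`
of length at most `N`, `f(Ŝ) ≥ (1 − 1/e) f(S*) − Σ ε i`. -/
theorem stmt5 {V : Type*} [Fintype V] [Nonempty V] (f : List V → ℝ)
    (hnonneg : ∀ S, 0 ≤ f S)
    (hmono : ∀ S₁ S₂ : List V, f S₁ ≤ f (S₁ ++ S₂) ∧ f S₂ ≤ f (S₁ ++ S₂))
    (hsub : ∀ (S₁ S₂ : List V) (a : V),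
      f (S₁ ++ S₂ ++ [a]) - f (S₁ ++ S₂) ≤ f (S₁ ++ [a]) - f S₁)
    (hempty : f [] = 0)
    (N : ℕ) (hN : 1 ≤ N) (gs : Fin N → V) (ε : Fin N → ℝ) (hε : ∀ i, 0 ≤ ε i)
    (hgreedy : ∀ (i : Fin N) (s : V),
      f ((List.ofFn gs).take i ++ [s]) - f ((List.ofFn gs).take i) - ε i ≤
        f ((List.ofFn gs).take i ++ [gs i]) - f ((List.ofFn gs).take i))
    (S' : List V) (hS' : S'.length ≤ N) :
    f (List.ofFn gs) ≥ (1 - 1 / Real.exp 1) * f S' - ∑ i, ε i := by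
  set T : ℕ → List V := fun k => (List.ofFn gs).take k with hT
  have hNpos : (0:ℝ) < N := by exact_mod_cast hN
  set c : ℝ := 1 - 1/(N:ℝ) with hc
  have hdiv : 1/(N:ℝ) ≤ 1 := by
    rw [div_le_one hNpos]; exact_mod_cast hN
  have hdiv0 : 0 ≤ 1/(N:ℝ) := by positivity
  have hc0 : 0 ≤ c := by rw [hc]; linarith
  have hc1 : c ≤ 1 := by rw [hc]; linarith
  set ε' : ℕ → ℝ := fun i => if h : i < N then ε ⟨i, h⟩ else 0 with hε'
  have hε'0 : ∀ i, 0 ≤ ε' i := by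
    intro i
    simp only [hε']
    split_ifs with h
    · exact hε _
    · exact le_rfl
  have hTsucc : ∀ k (hk : k < N), T (k+1) = T k ++ [gs ⟨k, hk⟩] := by
    intro k hk
    rw [hT]
    simp only
    rw [List.take_succ]
    congr 1
    have : k < (List.ofFn gs).length := by simpa using hk
    rw [List.getElem?_eq_getElem this]
    simp
  -- main induction
  have main : ∀ k, k ≤ N → f S' - f (T k) ≤ c^k * f S' + ∑ i ∈ range k, ε' i := by
    intro k
    induction k with
    | zero => intro _; simp [hT, hempty]
    | succ k ih =>
        intro hk1
        have hk : k < N := hk1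
        have ihk := ih (le_of_lt hk)
        set i : Fin N := ⟨k, hk⟩ with hi
        -- per-element marginal bound
        have hBdef : f (T (k+1)) = f (T k ++ [gs i]) := by rw [hTsucc k hk]
        set D : ℝ := f (T (k+1)) - f (T k) with hD
        have hD0 : 0 ≤ D := by
          rw [hD, hBdef]; linarith [(hmono (T k) [gs i]).1]
        have hstep : f S' ≤ f (T k) + (N:ℝ) * (D + ε i) := by
          have h1 : f S' ≤ f (T k ++ S') := (hmono (T k) S').2
          have h2 := marg_sum f hsub (T k) S'
          have h3 : (S'.map (fun a => f (T k ++ [a]) - f (T k))).sum ≤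
              (S'.length : ℝ) * (D + ε i) := by
            have h := List.sum_le_card_nsmul (S'.map (fun a => f (T k ++ [a]) - f (T k)))
              (D + ε i) ?_
            · simpa [nsmul_eq_mul, mul_add] using h
            · intro x hx
              simp only [List.mem_map] at hx
              obtain ⟨a, _, rfl⟩ := hx
              have := hgreedy i a
              rw [hD, hBdef]
              have hTi : (List.ofFn gs).take (i:ℕ) = T k := rfl
              rw [hTi] at this
              linarith
          have h4 : (S'.length : ℝ) * (D + ε i) ≤ (N:ℝ) * (D + ε i) := by
            apply mul_le_mul_of_nonneg_right _ (by linarith [hε i])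
            exact_mod_cast hS'
          linarith
        -- contraction
        have hcontr : f S' - f (T (k+1)) ≤ c * (f S' - f (T k)) + ε i := by
          have : (f S' - f (T k)) / N ≤ D + ε i := by
            rw [div_le_iff₀ hNpos]; nlinarith
          have hexp : c * (f S' - f (T k)) = (f S' - f (T k)) - (f S' - f (T k))/N := by
            rw [hc]; field_simp
          rw [hexp]
          linarith
        have hεi : ε' k = ε i := by simp [hε', hk, hi]
        have hsum : ∑ j ∈ range (k+1), ε' j = (∑ j ∈ range k, ε' j) + ε' k :=
          Finset.sum_range_succ _ _
        have hSnn : 0 ≤ ∑ j ∈ range k, ε' j := Finset.sum_nonneg fun j _ => hε'0 j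
        have hmul : c * (f S' - f (T k)) ≤ c * (c^k * f S' + ∑ j ∈ range k, ε' j) :=
          mul_le_mul_of_nonneg_left ihk hc0
        have : c * (c^k * f S' + ∑ j ∈ range k, ε' j) ≤
            c^(k+1) * f S' + ∑ j ∈ range k, ε' j := by
          have : c * (∑ j ∈ range k, ε' j) ≤ ∑ j ∈ range k, ε' j := by
            nlinarith
          rw [pow_succ]; nlinarith
        rw [hsum, hεi]
        linarith
  have hfull := main N le_rfl
  have hTN : T N = List.ofFn gs := by
    rw [hT]; simp
  have hεsum : ∑ i ∈ range N, ε' i = ∑ i, ε i := by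
    rw [← Fin.sum_univ_eq_sum_range (fun i => ε' i) N]
    apply Finset.sum_congr rfl
    intro j _
    simp [hε', j.2]
  -- (1 - 1/N)^N ≤ 1/e
  have hcN : c^N ≤ 1 / Real.exp 1 := by
    have h1 : c ≤ Real.exp (-(1/(N:ℝ))) := by
      have := Real.add_one_le_exp (-(1/(N:ℝ)))
      rw [hc]; linarith
    have h2 : c^N ≤ (Real.exp (-(1/(N:ℝ))))^N := pow_le_pow_left₀ hc0 h1 N
    have h3 : (Real.exp (-(1/(N:ℝ))))^N = Real.exp ((N:ℝ) * (-(1/(N:ℝ)))) := by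
      rw [← Real.exp_nat_mul]
    have h4 : (N:ℝ) * (-(1/(N:ℝ))) = -1 := by field_simp
    rw [h3, h4] at h2
    rw [Real.exp_neg] at h2
    rw [eq_comm] at *
    calc c^N ≤ (Real.exp 1)⁻¹ := h2
      _ = 1 / Real.exp 1 := by rw [one_div]
  rw [hTN, hεsum] at hfull
  have hfS' : 0 ≤ f S' := hnonneg S'
  nlinarith [hfull, mul_le_mul_of_nonneg_right hcN hfS']
end

section
/- Let f be a monotone submodular function on sequences over V with f(⟨⟩) = 0, and let Ŝ = ⟨ŝ₁,…,ŝ_N⟩ be the exact greedy sequence (ε_i = 0 for all i). Then for any sequence S* of length at most N, f(Ŝ) ≥ (1 − 1/e) f(S*). -/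
/-- exact greedy guarantee.  If `Ŝ` of length `N` is the exact greedy
sequence, then for any benchmark sequence `S*` of length at most `N`,
`f(Ŝ) ≥ (1 − 1/e) f(S*)`. -/
theorem stmt6 {V : Type*} [Fintype V] [Nonempty V] (f : List V → ℝ)
    (hnonneg : ∀ S, 0 ≤ f S)
    (hmono : ∀ S₁ S₂ : List V, f S₁ ≤ f (S₁ ++ S₂) ∧ f S₂ ≤ f (S₁ ++ S₂))
    (hsub : ∀ (S₁ S₂ : List V) (a : V),
      f (S₁ ++ S₂ ++ [a]) - f (S₁ ++ S₂) ≤ f (S₁ ++ [a]) - f S₁)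
    (hempty : f [] = 0)
    (N : ℕ) (hN : 1 ≤ N) (gs : Fin N → V)
    (hgreedy : ∀ (i : Fin N) (s : V),
      f ((List.ofFn gs).take i ++ [s]) - f ((List.ofFn gs).take i) ≤
        f ((List.ofFn gs).take i ++ [gs i]) - f ((List.ofFn gs).take i))
    (S' : List V) (hS' : S'.length ≤ N) :
    f (List.ofFn gs) ≥ (1 - 1 / Real.exp 1) * f S' := by
  set L := List.ofFn gs with hL
  have hNR : (1:ℝ) ≤ (N:ℝ) := by exact_mod_cast hN
  have hNpos : (0:ℝ) < (N:ℝ) := by linarith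
  -- sum of marginals bound
  have key : ∀ (S T : List V),
      f (T ++ S) - f T ≤ (S.map (fun a => f (T ++ [a]) - f T)).sum := by
    intro S
    induction S with
    | nil => intro T; simp
    | cons a S ih =>
      intro T
      have h1 := ih (T ++ [a])
      have h2 : (S.map (fun b => f (T ++ [a] ++ [b]) - f (T ++ [a]))).sum ≤
          (S.map (fun b => f (T ++ [b]) - f T)).sum := by
        apply List.sum_le_sum
        intro b _
        exact hsub T [a] b
      have heq : T ++ a :: S = (T ++ [a]) ++ S := by simp
      rw [heq]
      simp only [List.map_cons, List.sum_cons]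
      linarith
  -- take i ++ [gs i] = take (i+1)
  have htake : ∀ (i : ℕ) (hi : i < N), L.take i ++ [gs ⟨i, hi⟩] = L.take (i+1) := by
    intro i hi
    rw [List.take_succ]
    congr 1
    have : L[i]? = some (gs ⟨i, hi⟩) := by
      rw [List.getElem?_eq_getElem (by simp [hL, hi])]
      simp [hL]
    simp [this]
  -- nonneg of gains
  have hgain : ∀ (i : ℕ) (hi : i < N), 0 ≤ f (L.take (i+1)) - f (L.take i) := by
    intro i hi
    rw [← htake i hi]
    have := (hmono (L.take i) [gs ⟨i, hi⟩]).1
    linarith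
  -- step inequality
  have hstep : ∀ (i : ℕ) (hi : i < N),
      f S' - f (L.take (i+1)) ≤ (1 - 1/(N:ℝ)) * (f S' - f (L.take i)) := by
    intro i hi
    have h1 : f S' ≤ f (L.take i ++ S') := (hmono (L.take i) S').2
    have h2 := key S' (L.take i)
    have h3 : (S'.map (fun a => f (L.take i ++ [a]) - f (L.take i))).sum ≤
        (N:ℝ) * (f (L.take (i+1)) - f (L.take i)) := by
      have hb : ∀ x ∈ S'.map (fun a => f (L.take i ++ [a]) - f (L.take i)),
          x ≤ f (L.take (i+1)) - f (L.take i) := by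
        intro x hx
        obtain ⟨a, _, rfl⟩ := List.mem_map.mp hx
        have := hgreedy ⟨i, hi⟩ a
        rw [htake i hi] at this
        simpa using this
      calc (S'.map (fun a => f (L.take i ++ [a]) - f (L.take i))).sum
          ≤ (S'.map (fun a => f (L.take i ++ [a]) - f (L.take i))).length •
              (f (L.take (i+1)) - f (L.take i)) := List.sum_le_card_nsmul _ _ hb
        _ = (S'.length : ℝ) * (f (L.take (i+1)) - f (L.take i)) := by
              simp [nsmul_eq_mul]
        _ ≤ (N:ℝ) * (f (L.take (i+1)) - f (L.take i)) := by
              apply mul_le_mul_of_nonneg_right _ (hgain i hi)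
              exact_mod_cast hS'
    have h4 : f S' - f (L.take i) ≤ (N:ℝ) * (f (L.take (i+1)) - f (L.take i)) := by
      linarith
    have h5 : (1 - 1/(N:ℝ)) = ((N:ℝ)-1)/(N:ℝ) := by field_simp
    rw [h5, div_mul_eq_mul_div, le_div_iff₀ hNpos]
    nlinarith [h4]
  -- induction
  have hind : ∀ i ≤ N, f S' - f (L.take i) ≤ (1 - 1/(N:ℝ))^i * f S' := by
    intro i
    induction i with
    | zero => intro _; simp [hL, hempty]
    | succ i ih =>
      intro hi
      have hi' : i < N := hi
      have h1 := hstep i hi'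
      have h2 := ih (le_of_lt hi')
      have hcoef : 0 ≤ 1 - 1/(N:ℝ) := by
        rw [sub_nonneg, div_le_one hNpos]; exact hNR
      calc f S' - f (L.take (i+1)) ≤ (1 - 1/(N:ℝ)) * (f S' - f (L.take i)) := h1
        _ ≤ (1 - 1/(N:ℝ)) * ((1 - 1/(N:ℝ))^i * f S') := by
            exact mul_le_mul_of_nonneg_left h2 hcoef
        _ = (1 - 1/(N:ℝ))^(i+1) * f S' := by ring
  have hfinal := hind N le_rfl
  have hLfull : L.take N = L := by
    apply List.take_of_length_le
    simp [hL]
  rw [hLfull] at hfinal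
  -- (1 - 1/N)^N ≤ exp(-1) = 1/exp 1
  have hexp : (1 - 1/(N:ℝ))^N ≤ 1 / Real.exp 1 := by
    have h1 : 1 - 1/(N:ℝ) ≤ Real.exp (-(1/(N:ℝ))) := by
      have := Real.add_one_le_exp (-(1/(N:ℝ)))
      linarith
    have hcoef : 0 ≤ 1 - 1/(N:ℝ) := by
      rw [sub_nonneg, div_le_one hNpos]; exact hNR
    calc (1 - 1/(N:ℝ))^N ≤ (Real.exp (-(1/(N:ℝ))))^N :=
          pow_le_pow_left₀ hcoef h1 N
      _ = Real.exp ((N:ℝ) * (-(1/(N:ℝ)))) := by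
          rw [← Real.exp_nat_mul]
      _ = Real.exp (-1) := by
          congr 1
          field_simp
      _ = 1 / Real.exp 1 := by
          rw [Real.exp_neg]; ring
  have hfS' := hnonneg S'
  have : (1 - 1/(N:ℝ))^N * f S' ≤ (1 / Real.exp 1) * f S' :=
    mul_le_mul_of_nonneg_right hexp hfS'
  linarith
end

section
/- Let f be monotone submodular on sequences over V with f(⟨⟩) = 0, N ≥ 1, and let Δ_i = max_{s ∈ V} [f(Ŝ_{i-1} ⊕ ⟨s⟩) − f(Ŝ_{i-1})] be the maximum marginal gain at step i of a greedy construction. Then for any sequence S* of length at most N, Δ_i ≥ (f(S*) − f(Ŝ_{i-1})) / N. -/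
open Finset

/-- per-step lemma — the best single-element marginal gain from any
current sequence `P = Ŝ_{i-1}` is at least `(f(S*) − f(P)) / N` for any benchmark
sequence `S*` of length at most `N`. -/
theorem stmt7 {V : Type*} [Fintype V] [Nonempty V] (f : List V → ℝ)
    (hnonneg : ∀ S, 0 ≤ f S)
    (hmono : ∀ S₁ S₂ : List V, f S₁ ≤ f (S₁ ++ S₂) ∧ f S₂ ≤ f (S₁ ++ S₂))
    (hsub : ∀ (S₁ S₂ : List V) (a : V),
      f (S₁ ++ S₂ ++ [a]) - f (S₁ ++ S₂) ≤ f (S₁ ++ [a]) - f S₁)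
    (hempty : f [] = 0)
    (N : ℕ) (hN : 1 ≤ N) (P : List V) (S' : List V) (hS' : S'.length ≤ N) :
    (f S' - f P) / N ≤
      Finset.univ.sup' Finset.univ_nonempty (fun s : V => f (P ++ [s]) - f P) := by
  set Δ := Finset.univ.sup' Finset.univ_nonempty (fun s : V => f (P ++ [s]) - f P) with hΔ
  obtain ⟨v⟩ := ‹Nonempty V›
  have hΔ0 : 0 ≤ Δ := le_trans (by linarith [(hmono P [v]).1])
    (Finset.le_sup' (fun s : V => f (P ++ [s]) - f P) (Finset.mem_univ v))
  have key : ∀ L : List V, f (P ++ L) ≤ f P + L.length * Δ := by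
    intro L
    induction L using List.reverseRecOn with
    | nil => simp
    | append_singleton L a ih =>
      have h1 := hsub P L a
      have h2 : f (P ++ [a]) - f P ≤ Δ :=
        Finset.le_sup' (fun s : V => f (P ++ [s]) - f P) (Finset.mem_univ a)
      have : f (P ++ (L ++ [a])) = f (P ++ L ++ [a]) := by rw [List.append_assoc]
      rw [this]
      simp only [List.length_append, List.length_singleton]
      push_cast
      linarith
  have h3 : f S' ≤ f (P ++ S') := (hmono P S').2
  have h4 := key S'
  have hlen : (S'.length : ℝ) * Δ ≤ (N : ℝ) * Δ := by
    apply mul_le_mul_of_nonneg_right _ hΔ0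
    exact_mod_cast hS'
  rw [div_le_iff₀ (by exact_mod_cast hN)]
  nlinarith
end

section
/- Suppose at each step i = 1,…,N of a greedy sequence construction, the element is chosen by a classifier π_i whose cost-sensitive regret is r_i, meaning its expected marginal-gain shortfall relative to the best classifier in hypothesis class Π is at most r_i, and the best classifier in Π attains the maximum expected marginal gain. Then the expected value of the constructed length-N sequence satisfies E[f(Ŝ_N)] ≥ (1 − 1/e) max_{S ∈ classifier-sequences of length N} E[f(S)] − Σ_{i=1}^N r_i. -/
open Finset

/-- Theorem 1 of the paper: the expected objective `F` over environments
is monotone submodular over sequences of classifiers from the hypothesis class `Π`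
(a finite nonempty type). If at each slot `i` the chosen classifier `π i` has
cost-sensitive regret `r i`, i.e. its expected marginal gain falls short of the best
classifier's (which attains the maximum expected marginal gain) by at most `r i`, then
`E[f(Ŝ_N)] ≥ (1 − 1/e) · max over length-N classifier sequences of E[f(S)] − Σ r i`. -/
theorem stmt10 {H : Type*} [Fintype H] [Nonempty H]
    (F : List H → ℝ)  -- F S = E_{environments}[f(sequence of actions induced by S)]
    (hnonneg : ∀ S, 0 ≤ F S)
    (hmono : ∀ S₁ S₂ : List H, F S₁ ≤ F (S₁ ++ S₂) ∧ F S₂ ≤ F (S₁ ++ S₂))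
    (hsub : ∀ (S₁ S₂ : List H) (a : H),
      F (S₁ ++ S₂ ++ [a]) - F (S₁ ++ S₂) ≤ F (S₁ ++ [a]) - F S₁)
    (hempty : F [] = 0)
    (N : ℕ) (hN : 1 ≤ N) (π : Fin N → H) (r : Fin N → ℝ) (hr : ∀ i, 0 ≤ r i)
    (hregret : ∀ (i : Fin N) (π' : H),
      F ((List.ofFn π).take i ++ [π']) - F ((List.ofFn π).take i) - r i ≤
        F ((List.ofFn π).take i ++ [π i]) - F ((List.ofFn π).take i))
    (S' : List H) (hS' : S'.length ≤ N) :
    F (List.ofFn π) ≥ (1 - 1 / Real.exp 1) * F S' - ∑ i, r i := by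
  have hNpos : (0:ℝ) < N := by exact_mod_cast Nat.lt_of_lt_of_le Nat.zero_lt_one hN
  have hNne : (N:ℝ) ≠ 0 := ne_of_gt hNpos
  have hfrac0 : (0:ℝ) ≤ 1 - 1/(N:ℝ) := by
    have : (1:ℝ)/N ≤ 1 := by
      rw [div_le_one hNpos]; exact_mod_cast hN
    linarith
  have hfrac1 : 1 - 1/(N:ℝ) ≤ 1 := by
    have : (0:ℝ) ≤ 1/N := by positivity
    linarith
  set L := List.ofFn π with hL
  have hlen : L.length = N := by simp [hL]
  set g : ℕ → ℝ := fun k => F (L.take k) with hg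
  set OPT := F S' with hOPT
  set rr : ℕ → ℝ := fun k => if h : k < N then r ⟨k, h⟩ else 0 with hrr
  have hrr0 : ∀ k, 0 ≤ rr k := by
    intro k; simp only [hrr]; split
    · exact hr _
    · exact le_refl 0
  have htake : ∀ (k : ℕ) (hk : k < N), L.take (k+1) = L.take k ++ [π ⟨k, hk⟩] := by
    intro k hk
    rw [List.take_succ]
    congr 1
    have h : L[k]? = some (π ⟨k, hk⟩) := by
      rw [List.getElem?_eq_getElem (by omega : k < L.length)]
      simp [hL]
    simp [h]
  -- telescoping bound
  have tele : ∀ (T : List H) (C : ℝ), (∀ a : H, F (T ++ [a]) - F T ≤ C) →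
      ∀ L' : List H, F (T ++ L') - F T ≤ L'.length * C := by
    intro T C hC L'
    induction L' using List.reverseRecOn with
    | nil => simp
    | append_singleton L'' a ih =>
      have h1 : F (T ++ L'' ++ [a]) - F (T ++ L'') ≤ F (T ++ [a]) - F T := hsub T L'' a
      have h2 := hC a
      have heq : T ++ (L'' ++ [a]) = T ++ L'' ++ [a] := (List.append_assoc T L'' [a]).symm
      rw [heq]
      have hl : ((L'' ++ [a]).length : ℝ) = (L''.length : ℝ) + 1 := by simp
      rw [hl, add_mul, one_mul]
      linarith [ih]
  -- per-step inequality
  have key : ∀ (k : ℕ) (hk : k < N), OPT - g (k+1) ≤ (1 - 1/(N:ℝ)) * (OPT - g k) + rr k := by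
    intro k hk
    set T := L.take k with hT
    have hT1 : L.take (k+1) = T ++ [π ⟨k, hk⟩] := htake k hk
    set C := g (k+1) - g k + rr k with hC
    have hrreq : rr k = r ⟨k, hk⟩ := by simp [hrr, hk]
    have hCbound : ∀ a : H, F (T ++ [a]) - F T ≤ C := by
      intro a
      have := hregret ⟨k, hk⟩ a
      simp only [hL] at this ⊢
      have hgk1 : g (k+1) = F (T ++ [π ⟨k, hk⟩]) := by
        simp only [hg]; rw [hT1]
      rw [hC, hgk1, hrreq]
      simpa [hg, hT] using this
    have hCnn : 0 ≤ C := by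
      have hm : F T ≤ F (T ++ [π ⟨k, hk⟩]) := (hmono T [π ⟨k, hk⟩]).1
      have hgk1 : g (k+1) = F (T ++ [π ⟨k, hk⟩]) := by
        simp only [hg]; rw [hT1]
      have : 0 ≤ rr k := hrr0 k
      rw [hC, hgk1]
      simp only [hg, hT] at *
      linarith
    have hOle : OPT ≤ F (T ++ S') := (hmono T S').2
    have htel : F (T ++ S') - F T ≤ S'.length * C := tele T C hCbound S'
    have hlc : (S'.length : ℝ) * C ≤ N * C := by
      apply mul_le_mul_of_nonneg_right _ hCnn
      exact_mod_cast hS'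
    have hmain : OPT - g k ≤ N * C := by
      have : g k = F T := rfl
      linarith
    have hdiv : (OPT - g k) / N ≤ C := by
      rw [div_le_iff₀ hNpos]; linarith [hmain, mul_comm C (N:ℝ)]
    have hexp : (1 - 1/(N:ℝ)) * (OPT - g k) = (OPT - g k) - (OPT - g k)/N := by
      field_simp
    rw [hexp, hC] at *
    linarith
  -- induction
  have hOPTnn : 0 ≤ OPT := hnonneg S'
  have main : ∀ k, k ≤ N → OPT - g k ≤ (1 - 1/(N:ℝ))^k * OPT + ∑ i ∈ range k, rr i := by
    intro k
    induction k with
    | zero =>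
      intro _
      simp [hg, hempty]
    | succ k ih =>
      intro hk1
      have hk : k < N := hk1
      have ih' := ih (le_of_lt hk)
      have hkey := key k hk
      have hsum0 : 0 ≤ ∑ i ∈ range k, rr i := Finset.sum_nonneg fun i _ => hrr0 i
      have hmul : (1 - 1/(N:ℝ)) * (OPT - g k) ≤
          (1 - 1/(N:ℝ)) * ((1 - 1/(N:ℝ))^k * OPT + ∑ i ∈ range k, rr i) :=
        mul_le_mul_of_nonneg_left ih' hfrac0
      rw [Finset.sum_range_succ]
      have hpow : (1 - 1/(N:ℝ)) * ((1 - 1/(N:ℝ))^k * OPT) = (1 - 1/(N:ℝ))^(k+1) * OPT := by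
        ring
      nlinarith [hsum0, hfrac0, hfrac1]
  have hfinal := main N le_rfl
  have hgN : g N = F L := by simp only [hg]; rw [← hlen, List.take_length]
  have hsumeq : ∑ i ∈ range N, rr i = ∑ i, r i := by
    rw [← Fin.sum_univ_eq_sum_range]
    apply Finset.sum_congr rfl
    intro i _
    simp [hrr, i.isLt]
  -- exponential bound
  have hebound : (1 - 1/(N:ℝ))^N ≤ 1 / Real.exp 1 := by
    have h1 : 1 - 1/(N:ℝ) ≤ Real.exp (-(1/N)) := by
      have := Real.add_one_le_exp (-(1/(N:ℝ)))
      linarith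
    have h2 : (1 - 1/(N:ℝ))^N ≤ (Real.exp (-(1/N)))^N :=
      pow_le_pow_left₀ hfrac0 h1 N
    have h3 : (Real.exp (-(1/(N:ℝ))))^N = Real.exp (-1) := by
      rw [← Real.exp_nat_mul]
      congr 1
      field_simp
    rw [h3, Real.exp_neg, ← one_div] at h2
    exact h2
  have hOPTmul : (1 - 1/(N:ℝ))^N * OPT ≤ (1 / Real.exp 1) * OPT :=
    mul_le_mul_of_nonneg_right hebound hOPTnn
  rw [hgN, hsumeq] at hfinal
  linarith
end

section
/- Combining the greedy-with-error bound and the classification-to-regression reduction: if each slot i of a length-N greedy sequence is filled by a predictor induced from a squared-loss regressor with regression regret r_reg_i over k = |V| actions, then the expected value of the resulting sequence is at least (1 − 1/e) · max_S E[f(S)] − Σ_{i=1}^N √(2(|V|−1) r_reg_i), where the max is over sequences of cost-sensitive classifiers of length N. -/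
open Finset

lemma stmt14_aux {H : Type*} (F : List H → ℝ)
    (hsub : ∀ (S₁ S₂ : List H) (a : H),
      F (S₁ ++ S₂ ++ [a]) - F (S₁ ++ S₂) ≤ F (S₁ ++ [a]) - F S₁) :
    ∀ (T S : List H), F (S ++ T) - F S ≤ (T.map (fun b => F (S ++ [b]) - F S)).sum := by
  intro T
  induction T with
  | nil => intro S; simp
  | cons a T ih =>
    intro S
    have h1 : F ((S ++ [a]) ++ T) - F (S ++ [a]) ≤
        (T.map (fun b => F ((S ++ [a]) ++ [b]) - F (S ++ [a]))).sum := ih (S ++ [a])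
    have h2 : (T.map (fun b => F ((S ++ [a]) ++ [b]) - F (S ++ [a]))).sum ≤
        (T.map (fun b => F (S ++ [b]) - F S)).sum := by
      apply List.sum_le_sum
      intro b _
      exact hsub S [a] b
    have h3 : S ++ a :: T = (S ++ [a]) ++ T := by simp
    simp only [List.map_cons, List.sum_cons, h3]
    have := le_trans h1 h2
    linarith

/-- Theorem 2 of the paper. -/
theorem stmt14 {V : Type*} [Fintype V] [Nonempty V] {H : Type*} [Fintype H] [Nonempty H]
    (F : List H → ℝ)  -- F S = E_{environments}[f(induced action sequence of S)]
    (hnonneg : ∀ S, 0 ≤ F S)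
    (hmono : ∀ S₁ S₂ : List H, F S₁ ≤ F (S₁ ++ S₂) ∧ F S₂ ≤ F (S₁ ++ S₂))
    (hsub : ∀ (S₁ S₂ : List H) (a : H),
      F (S₁ ++ S₂ ++ [a]) - F (S₁ ++ S₂) ≤ F (S₁ ++ [a]) - F S₁)
    (hempty : F [] = 0)
    (N : ℕ) (hN : 1 ≤ N) (π : Fin N → H) (rreg : Fin N → ℝ) (hr : ∀ i, 0 ≤ rreg i)
    -- slot `i` is filled with cost-sensitive regret at most `√(2(|V|−1) rreg i)`:
    (hregret : ∀ (i : Fin N) (π' : H),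
      F ((List.ofFn π).take i ++ [π']) - F ((List.ofFn π).take i) -
          Real.sqrt (2 * ((Fintype.card V : ℝ) - 1) * rreg i) ≤
        F ((List.ofFn π).take i ++ [π i]) - F ((List.ofFn π).take i))
    (S' : List H) (hS' : S'.length ≤ N) :
    F (List.ofFn π) ≥ (1 - 1 / Real.exp 1) * F S' -
      ∑ i, Real.sqrt (2 * ((Fintype.card V : ℝ) - 1) * rreg i) := by
  set ε : Fin N → ℝ := fun i => Real.sqrt (2 * ((Fintype.card V : ℝ) - 1) * rreg i) with hε
  have hεnn : ∀ i, 0 ≤ ε i := fun i => Real.sqrt_nonneg _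
  set T : ℕ → List H := fun n => (List.ofFn π).take n with hT
  have hTsucc : ∀ i : Fin N, T (i + 1) = T i ++ [π i] := by
    intro i
    have hi : (i : ℕ) < (List.ofFn π).length := by simp [i.isLt]
    simp only [hT, List.take_succ]
    congr 1
    rw [List.getElem?_eq_getElem hi]
    simp
  -- per-step inequality
  have hstep : ∀ i : Fin N,
      F S' - F (T (i + 1)) ≤ (1 - 1 / (N : ℝ)) * (F S' - F (T i)) + ε i := by
    intro i
    set g : ℝ := F (T i ++ [π i]) - F (T i) with hg
    have hterm : ∀ b : H, F (T i ++ [b]) - F (T i) ≤ g + ε i := by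
      intro b
      have := hregret i b
      try simp only [← hT, ← hε] at this
      linarith
    have hgε : 0 ≤ g + ε i := by
      have h0 : F (T i) ≤ F (T i ++ [Classical.arbitrary H]) := (hmono (T i) _).1
      have := hterm (Classical.arbitrary H)
      linarith
    have h1 : F S' ≤ F (T i ++ S') := (hmono (T i) S').2
    have h2 : F (T i ++ S') - F (T i) ≤
        (S'.map (fun b => F (T i ++ [b]) - F (T i))).sum := stmt14_aux F hsub S' (T i)
    have h3 : (S'.map (fun b => F (T i ++ [b]) - F (T i))).sum ≤ (S'.length : ℝ) * (g + ε i) := by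
      calc (S'.map (fun b => F (T i ++ [b]) - F (T i))).sum
          ≤ (S'.map (fun _ => g + ε i)).sum := List.sum_le_sum (fun b _ => hterm b)
        _ = (S'.length : ℝ) * (g + ε i) := by
            rw [List.map_const', List.sum_replicate, nsmul_eq_mul]
    have h4 : (S'.length : ℝ) * (g + ε i) ≤ (N : ℝ) * (g + ε i) :=
      mul_le_mul_of_nonneg_right (by exact_mod_cast hS') hgε
    have hNpos : (0 : ℝ) < N := by exact_mod_cast hN
    have h5 : F S' - F (T i) ≤ (N : ℝ) * (g + ε i) := by linarith
    have h6 : (F S' - F (T i)) / N - ε i ≤ g := by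
      rw [div_sub' hNpos.ne', div_le_iff₀ hNpos]
      ring_nf
      nlinarith
    rw [hTsucc i]
    have hexp : (1 - 1 / (N : ℝ)) * (F S' - F (T i)) =
        (F S' - F (T i)) - (F S' - F (T i)) / N := by field_simp
    rw [hexp]
    linarith
  -- ε extended to ℕ
  set ε' : ℕ → ℝ := fun j => if h : j < N then ε ⟨j, h⟩ else 0 with hε'
  have hε'nn : ∀ j, 0 ≤ ε' j := by
    intro j; by_cases h : j < N <;> simp [hε', h, hεnn]
  have hq0 : (0 : ℝ) ≤ 1 - 1 / (N : ℝ) := by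
    have : (1 : ℝ) ≤ N := by exact_mod_cast hN
    have hNpos : (0 : ℝ) < N := by linarith
    rw [sub_nonneg, div_le_one hNpos]; exact this
  have hq1 : 1 - 1 / (N : ℝ) ≤ 1 := by
    have hNpos : (0 : ℝ) < N := by exact_mod_cast hN
    have : 0 < 1 / (N : ℝ) := by positivity
    linarith
  -- induction
  have hmain : ∀ n ≤ N, F S' - F (T n) ≤
      (1 - 1 / (N : ℝ)) ^ n * F S' + ∑ j ∈ range n, ε' j := by
    intro n
    induction n with
    | zero => intro _; simp [hT, hempty]
    | succ n ih =>
      intro hn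
      have hnN : n < N := hn
      have ihn := ih (le_of_lt hnN)
      have hs := hstep ⟨n, hnN⟩
      simp only [Fin.val_mk] at hs
      have hεeq : ε' n = ε ⟨n, hnN⟩ := by simp [hε', hnN]
      have hsumnn : 0 ≤ ∑ j ∈ range n, ε' j := Finset.sum_nonneg (fun j _ => hε'nn j)
      have hmul : (1 - 1 / (N : ℝ)) * (F S' - F (T n)) ≤
          (1 - 1 / (N : ℝ)) * ((1 - 1 / (N : ℝ)) ^ n * F S' + ∑ j ∈ range n, ε' j) :=
        mul_le_mul_of_nonneg_left ihn hq0
      have hshrink : (1 - 1 / (N : ℝ)) * ((1 - 1 / (N : ℝ)) ^ n * F S' + ∑ j ∈ range n, ε' j) ≤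
          (1 - 1 / (N : ℝ)) ^ (n + 1) * F S' + ∑ j ∈ range n, ε' j := by
        rw [pow_succ]
        have : (1 - 1 / (N : ℝ)) * ∑ j ∈ range n, ε' j ≤ ∑ j ∈ range n, ε' j := by
          nlinarith
        nlinarith
      rw [Finset.sum_range_succ, hεeq]
      linarith [hs, hmul, hshrink]
  have hfin := hmain N le_rfl
  have hTN : T N = List.ofFn π := List.take_of_length_le (by simp)
  have hsum : ∑ j ∈ range N, ε' j = ∑ i, ε i := by
    rw [Finset.sum_range]
    apply Finset.sum_congr rfl
    intro i _
    simp [hε', i.isLt]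
  -- (1-1/N)^N ≤ 1/e
  have hpow : (1 - 1 / (N : ℝ)) ^ N ≤ 1 / Real.exp 1 := by
    have hNpos : (0 : ℝ) < N := by exact_mod_cast hN
    have h1 : 1 - 1 / (N : ℝ) ≤ Real.exp (-(1 / N)) := by
      have := Real.add_one_le_exp (-(1 / (N : ℝ)))
      linarith
    calc (1 - 1 / (N : ℝ)) ^ N ≤ Real.exp (-(1 / N)) ^ N := pow_le_pow_left₀ hq0 h1 N
      _ = Real.exp (-(1 / N) * N) := by rw [← Real.exp_nat_mul]; ring_nf
      _ = Real.exp (-1) := by congr 1; field_simp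
      _ = 1 / Real.exp 1 := by rw [Real.exp_neg]; rw [one_div]
  have hS'nn : 0 ≤ F S' := hnonneg S'
  have hpowmul : (1 - 1 / (N : ℝ)) ^ N * F S' ≤ (1 / Real.exp 1) * F S' :=
    mul_le_mul_of_nonneg_right hpow hS'nn
  rw [hTN, hsum] at hfin
  have : ∑ i, ε i = ∑ i, Real.sqrt (2 * ((Fintype.card V : ℝ) - 1) * rreg i) := rfl
  rw [← this]
  nlinarith
end
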